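/- Let H₁,…,Hₘ be finite-dimensional real inner product spaces, H ≤ H₁ × ⋯ × Hₘ, and p₁,…,pₘ ∈ [1,∞]. Suppose dim H = Σⱼ (dim Hⱼ)/pⱼ and dim V ≤ Σⱼ (dim πⱼV)/pⱼ for every subspace V ≤ H. Then for every subspace W ≤ H^⊥ one has dim W ≤ Σⱼ (dim πⱼW)/pⱼ', where pⱼ' is the conjugate exponent of pⱼ. -/

import Mathlib

open Module ENNReal

/-- The scaling and dimension conditions for the data `(H, p)` imply the
dimension condition for the dual data `(Hᗮ, p')`. -/
theorem dual_dimension_condition {m : ℕ} {E : Fin m → Type*}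
    [∀ j, NormedAddCommGroup (E j)] [∀ j, InnerProductSpace ℝ (E j)]
    [∀ j, FiniteDimensional ℝ (E j)]
    (H : Submodule ℝ (PiLp 2 E)) (p q : Fin m → ℝ≥0∞)
    (hp : ∀ j, 1 ≤ p j)
    (hq : ∀ j, 1 / p j + 1 / q j = 1)
    (hscale : (finrank ℝ H : ℝ≥0∞) = ∑ j, (finrank ℝ (E j) : ℝ≥0∞) / p j)
    (hdim : ∀ V ≤ H, (finrank ℝ V : ℝ≥0∞)
      ≤ ∑ j, (finrank ℝ (V.map (PiLp.projₗ 2 E j)) : ℝ≥0∞) / p j) :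
    ∀ W ≤ Hᗮ, (finrank ℝ W : ℝ≥0∞)
      ≤ ∑ j, (finrank ℝ (W.map (PiLp.projₗ 2 E j)) : ℝ≥0∞) / q j := by
  intro W hW
  set K : ∀ j, Submodule ℝ (E j) := fun j => W.map (PiLp.projₗ 2 E j) with hK
  set S : Submodule ℝ (PiLp 2 E) :=
    (Submodule.pi Set.univ K).comap (WithLp.linearEquiv 2 ℝ (∀ j, E j)).toLinearMap with hSdef
  have memS : ∀ x : PiLp 2 E, x ∈ S ↔ ∀ j, x j ∈ K j := by
    intro x
    simp [hSdef, Submodule.mem_pi]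
  set V : Submodule ℝ (PiLp 2 E) := H ⊓ Sᗮ with hVdef
  -- Step A
  have hWS : W ≤ S := by
    intro w hw
    rw [memS]
    exact fun j => ⟨w, hw, rfl⟩
  have hWHS : finrank ℝ W ≤ finrank ℝ ↥(Hᗮ ⊓ S) :=
    Submodule.finrank_mono (le_inf hW hWS)
  have e1 : finrank ℝ V + finrank ℝ ↥(Hᗮ ⊔ S) = finrank ℝ (PiLp 2 E) := by
    have : (Hᗮ ⊔ S)ᗮ = V := by
      rw [hVdef, ← Submodule.inf_orthogonal, Submodule.orthogonal_orthogonal]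
    rw [← this, add_comm]
    exact Submodule.finrank_add_finrank_orthogonal _
  have e2 : finrank ℝ ↥(Hᗮ ⊔ S) + finrank ℝ ↥(Hᗮ ⊓ S) = finrank ℝ ↥Hᗮ + finrank ℝ S :=
    Submodule.finrank_sup_add_finrank_inf_eq _ _
  have e3 : finrank ℝ H + finrank ℝ ↥Hᗮ = finrank ℝ (PiLp 2 E) :=
    Submodule.finrank_add_finrank_orthogonal _
  have hA : finrank ℝ H + finrank ℝ W ≤ finrank ℝ V + finrank ℝ S := by omega
  -- finrank S ≤ ∑ finrank K j
  have hSle : finrank ℝ S ≤ ∑ j, finrank ℝ (K j) := by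
    have hinj : Function.Injective
        (LinearMap.pi (fun j => LinearMap.codRestrict (K j)
          ((PiLp.projₗ 2 E j).comp S.subtype)
          (fun x => ((memS x.1).1 x.2) j)) : S →ₗ[ℝ] ∀ j, K j) := by
      intro x y hxy
      ext j
      exact congrArg Subtype.val (congrFun hxy j)
    calc finrank ℝ S ≤ finrank ℝ (∀ j, K j) :=
          LinearMap.finrank_le_finrank_of_injective hinj
      _ = ∑ j, finrank ℝ (K j) := Module.finrank_pi_fintype ℝ
  -- Step B
  have hB : ∀ j, finrank ℝ (V.map (PiLp.projₗ 2 E j)) + finrank ℝ (K j) ≤ finrank ℝ (E j) := by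
    intro j
    have hle : V.map (PiLp.projₗ 2 E j) ≤ (K j)ᗮ := by
      rintro y ⟨v, hv, rfl⟩
      rw [Submodule.mem_orthogonal]
      intro k hk
      have hvS : v ∈ Sᗮ := hv.2
      have hs : ((WithLp.equiv 2 (∀ j, E j)).symm (Pi.single j k)) ∈ S := by
        rw [memS]
        intro i
        rcases eq_or_ne i j with rfl | hij
        · simpa using hk
        · simp [Pi.single_eq_of_ne hij]
      have := (Submodule.mem_orthogonal _ _).1 hvS _ hs
      rw [PiLp.inner_apply] at this
      rw [show (inner ℝ k (PiLp.projₗ 2 E j v) : ℝ) =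
          ∑ i, inner ℝ (((WithLp.equiv 2 (∀ j, E j)).symm (Pi.single j k)) i) (v i) from ?_]
      · exact this
      · rw [Finset.sum_eq_single j]
        · simp
        · intro i _ hij
          simp [Pi.single_eq_of_ne hij]
        · simp
    calc finrank ℝ (V.map (PiLp.projₗ 2 E j)) + finrank ℝ (K j)
        ≤ finrank ℝ ((K j)ᗮ) + finrank ℝ (K j) := by
          exact Nat.add_le_add_right (Submodule.finrank_mono hle) _
      _ = finrank ℝ (E j) := by rw [add_comm]; exact Submodule.finrank_add_finrank_orthogonal _
  -- Step C : ENNReal bookkeeping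
  have hV := hdim V inf_le_left
  have key : (finrank ℝ V : ℝ≥0∞) + ∑ j, (finrank ℝ (K j) : ℝ≥0∞) / p j
      ≤ finrank ℝ H := by
    calc (finrank ℝ V : ℝ≥0∞) + ∑ j, (finrank ℝ (K j) : ℝ≥0∞) / p j
        ≤ (∑ j, (finrank ℝ (V.map (PiLp.projₗ 2 E j)) : ℝ≥0∞) / p j)
          + ∑ j, (finrank ℝ (K j) : ℝ≥0∞) / p j := add_le_add_left hV _
      _ = ∑ j, ((finrank ℝ (V.map (PiLp.projₗ 2 E j)) : ℝ≥0∞)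
            + finrank ℝ (K j)) / p j := by
          rw [← Finset.sum_add_distrib]
          exact Finset.sum_congr rfl fun j _ => ENNReal.div_add_div_same
      _ ≤ ∑ j, (finrank ℝ (E j) : ℝ≥0∞) / p j := by
          refine Finset.sum_le_sum fun j _ => ENNReal.div_le_div_right ?_ _
          exact_mod_cast Nat.cast_le.2 (hB j)
      _ = finrank ℝ H := hscale.symm
  have hsplit : ∀ j, (finrank ℝ (K j) : ℝ≥0∞)
      = (finrank ℝ (K j) : ℝ≥0∞) / p j + (finrank ℝ (K j) : ℝ≥0∞) / q j := by
    intro j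
    rw [div_eq_mul_inv, div_eq_mul_inv, ← one_div, ← one_div, ← mul_add, hq j, mul_one]
  have hfinp : (∑ j, (finrank ℝ (K j) : ℝ≥0∞) / p j) ≠ ∞ := by
    refine ne_top_of_le_ne_top
      ((ENNReal.sum_lt_top.2 fun j _ => ENNReal.natCast_lt_top (finrank ℝ (K j))).ne)
      (Finset.sum_le_sum fun j _ => ?_)
    simpa using ENNReal.div_le_div (le_refl ((finrank ℝ (K j) : ℝ≥0∞))) (hp j)
  have hcast : (finrank ℝ H : ℝ≥0∞) + finrank ℝ W
      ≤ (finrank ℝ V : ℝ≥0∞) + ∑ j, (finrank ℝ (K j) : ℝ≥0∞) := by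
    have h1 : (finrank ℝ H : ℝ≥0∞) + finrank ℝ W
        ≤ ((finrank ℝ V + finrank ℝ S : ℕ) : ℝ≥0∞) := by exact_mod_cast hA
    refine h1.trans ?_
    push_cast
    exact add_le_add_right (by exact_mod_cast hSle) _
  have hsum : (∑ j, (finrank ℝ (K j) : ℝ≥0∞))
      = (∑ j, (finrank ℝ (K j) : ℝ≥0∞) / p j) + ∑ j, (finrank ℝ (K j) : ℝ≥0∞) / q j := by
    rw [← Finset.sum_add_distrib]
    exact Finset.sum_congr rfl fun j _ => hsplit j
  have main : ((finrank ℝ H : ℝ≥0∞) + ∑ j, (finrank ℝ (K j) : ℝ≥0∞) / p j)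
        + finrank ℝ W
      ≤ ((finrank ℝ H : ℝ≥0∞) + ∑ j, (finrank ℝ (K j) : ℝ≥0∞) / p j)
        + ∑ j, (finrank ℝ (K j) : ℝ≥0∞) / q j := by
    calc ((finrank ℝ H : ℝ≥0∞) + ∑ j, (finrank ℝ (K j) : ℝ≥0∞) / p j) + finrank ℝ W
        = ((finrank ℝ H : ℝ≥0∞) + finrank ℝ W) + ∑ j, (finrank ℝ (K j) : ℝ≥0∞) / p j := by
          ring
      _ ≤ ((finrank ℝ V : ℝ≥0∞) + ∑ j, (finrank ℝ (K j) : ℝ≥0∞))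
            + ∑ j, (finrank ℝ (K j) : ℝ≥0∞) / p j := add_le_add_left hcast _
      _ = ((finrank ℝ V : ℝ≥0∞) + ∑ j, (finrank ℝ (K j) : ℝ≥0∞) / p j)
            + ∑ j, (finrank ℝ (K j) : ℝ≥0∞) := by ring
      _ ≤ (finrank ℝ H : ℝ≥0∞) + ∑ j, (finrank ℝ (K j) : ℝ≥0∞) := add_le_add_left key _
      _ = ((finrank ℝ H : ℝ≥0∞) + ∑ j, (finrank ℝ (K j) : ℝ≥0∞) / p j)
            + ∑ j, (finrank ℝ (K j) : ℝ≥0∞) / q j := by rw [hsum]; ring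
  exact (ENNReal.add_le_add_iff_left
    (ENNReal.add_ne_top.2 ⟨ENNReal.natCast_ne_top _, hfinp⟩)).1 main
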